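/- arXiv:2006.08737 — 2 statements merged into one kernel-verified Lean document; each statement's English description precedes it below -/
import Mathlib

section
/- Let H be symmetric positive definite, φ(p) = (1/2)pᵀHp − gᵀp with minimizer p* = H⁻¹g, and suppose the vector p̂ satisfies φ(p̂) ≤ ε² + (1−ζ²)φ(p*) for some ζ ∈ (0,1), ε ≥ 0. Assume f has L-Lipschitz Hessian, H = ∇²f(w_t), g = ∇f(w_t), ∇f(w*) = 0, and w_{t+1} = w_t − p̂. Then with Δ_t = w_t − w* and Δ_{t+1} = w_{t+1} − w*, one has Δ_{t+1}ᵀ H Δ_{t+1} ≤ L‖Δ_{t+1}‖‖Δ_t‖² + (ζ²/(1−ζ²)) Δ_tᵀ H Δ_t + 2ε². -/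
open Matrix

private lemma stmt6_aux (A b z D P ε ζ nrm : ℝ) (hs2 : 0 < 1 - ζ ^ 2)
    (h1 : P ≤ ε ^ 2 + (1 - ζ ^ 2) * ((1/2) * ((1 - ζ ^ 2)⁻¹) ^ 2 * A
        - (1 - ζ ^ 2)⁻¹ * (A + b)))
    (hid : D = A + 2 * P + 2 * (b - z))
    (hcs : -z ≤ nrm) :
    D ≤ 2 * nrm + (ζ ^ 2 / (1 - ζ ^ 2)) * A + 2 * ε ^ 2 := by
  have h2 : (1 - ζ ^ 2) * ((1/2) * ((1 - ζ ^ 2)⁻¹) ^ 2 * A - (1 - ζ ^ 2)⁻¹ * (A + b))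
      = (1/2) * (1 - ζ ^ 2)⁻¹ * A - A - b := by
    field_simp
    ring
  have h3 : ζ ^ 2 / (1 - ζ ^ 2) * A = (1 - ζ ^ 2)⁻¹ * A - A := by
    field_simp
    ring
  linarith

/-- With H = ∇²f(w_t) positive definite, g = ∇f(w_t),
φ(p) = (1/2)pᵀHp − gᵀp minimized by p* = H⁻¹g, if the Hessian of f is L-Lipschitz
(operator norm), ∇f(w*) = 0, p̂ satisfies φ(p̂) ≤ ε² + (1−ζ²)φ(p*), and
w_{t+1} = w_t − p̂, then with Δ_t = w_t − w*, Δ_{t+1} = w_{t+1} − w*: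
Δ_{t+1}ᵀHΔ_{t+1} ≤ L‖Δ_{t+1}‖‖Δ_t‖² + (ζ²/(1−ζ²))Δ_tᵀHΔ_t + 2ε². -/
theorem stmt6 {d : ℕ} (f : EuclideanSpace ℝ (Fin d) → ℝ)
    (g : EuclideanSpace ℝ (Fin d) → EuclideanSpace ℝ (Fin d))
    (Hf : EuclideanSpace ℝ (Fin d) → Matrix (Fin d) (Fin d) ℝ)
    (L ε ζ : ℝ) (hL : 0 ≤ L) (hζ : ζ ∈ Set.Ioo (0 : ℝ) 1) (hε : 0 ≤ ε)
    (hgrad : ∀ w, HasGradientAt f (g w) w)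
    (hhess : ∀ w, HasFDerivAt g
      (LinearMap.toContinuousLinearMap (Matrix.toEuclideanLin (Hf w))) w)
    (hlip : ∀ w w', ‖LinearMap.toContinuousLinearMap (Matrix.toEuclideanLin (Hf w)) -
        LinearMap.toContinuousLinearMap (Matrix.toEuclideanLin (Hf w'))‖ ≤ L * ‖w - w'‖)
    (wt wt1 wstar phat pstar : EuclideanSpace ℝ (Fin d))
    (H : Matrix (Fin d) (Fin d) ℝ) (hHdef : H = Hf wt) (hH : H.PosDef)
    (hstar : g wstar = 0)
    (φ : EuclideanSpace ℝ (Fin d) → ℝ)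
    (hφ : ∀ p : EuclideanSpace ℝ (Fin d),
      φ p = (1 / 2) * (p ⬝ᵥ H.mulVec p) - (g wt) ⬝ᵥ p)
    (hpstar : pstar = H⁻¹.mulVec (g wt))
    (hphat : φ phat ≤ ε ^ 2 + (1 - ζ ^ 2) * φ pstar)
    (hupdate : wt1 = wt - phat)
    (Δt Δt1 : EuclideanSpace ℝ (Fin d))
    (hΔt : Δt = wt - wstar) (hΔt1 : Δt1 = wt1 - wstar) :
    Δt1 ⬝ᵥ H.mulVec Δt1 ≤
      L * ‖Δt1‖ * ‖Δt‖ ^ 2 + (ζ ^ 2 / (1 - ζ ^ 2)) * (Δt ⬝ᵥ H.mulVec Δt) + 2 * ε ^ 2 := by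
  obtain ⟨hζ0, hζ1⟩ := hζ
  have hs2 : (0:ℝ) < 1 - ζ ^ 2 := by nlinarith
  -- symmetry and positivity of H
  have hHt : Hᵀ = H := by
    have := hH.1
    rw [Matrix.IsHermitian] at this
    simpa [Matrix.conjTranspose_eq_transpose_of_trivial] using this
  have hsym : ∀ x y : Fin d → ℝ, x ⬝ᵥ H *ᵥ y = y ⬝ᵥ H *ᵥ x := by
    intro x y
    rw [Matrix.dotProduct_mulVec, ← Matrix.mulVec_transpose, hHt, dotProduct_comm]
  have hpsd : ∀ x : Fin d → ℝ, 0 ≤ x ⬝ᵥ H *ᵥ x := fun x => by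
    simpa using hH.posSemidef.re_dotProduct_nonneg x
  -- bridging lemmas between EuclideanSpace operations and dotProduct
  have subdp : ∀ x y z : EuclideanSpace ℝ (Fin d), (x - y) ⬝ᵥ z = x ⬝ᵥ z - y ⬝ᵥ z :=
    fun x y z => sub_dotProduct x y z
  have adddp : ∀ x y z : EuclideanSpace ℝ (Fin d), (x + y) ⬝ᵥ z = x ⬝ᵥ z + y ⬝ᵥ z :=
    fun x y z => add_dotProduct x y z
  have dpsub : ∀ x y z : EuclideanSpace ℝ (Fin d), x ⬝ᵥ (y - z) = x ⬝ᵥ y - x ⬝ᵥ z :=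
    fun x y z => dotProduct_sub x y z
  have smuldp : ∀ (c : ℝ) (x z : EuclideanSpace ℝ (Fin d)), (c • x) ⬝ᵥ z = c * (x ⬝ᵥ z) :=
    fun c x z => smul_dotProduct c x z
  have mvsub : ∀ x y : EuclideanSpace ℝ (Fin d), H *ᵥ (x - y) = H *ᵥ x - H *ᵥ y :=
    fun x y => Matrix.mulVec_sub H x y
  have mvsmul : ∀ (c : ℝ) (x : EuclideanSpace ℝ (Fin d)), H *ᵥ (c • x) = c • (H *ᵥ x) :=
    fun c x => Matrix.mulVec_smul H c x
  -- the error vector e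
  set Hv : EuclideanSpace ℝ (Fin d) := (WithLp.equiv 2 (Fin d → ℝ)).symm (H *ᵥ Δt) with hHvdef
  set e : EuclideanSpace ℝ (Fin d) := g wt - Hv with hedef
  have hgw : g wt = Hv + e := by rw [hedef]; abel
  have hHvdp : ∀ z : EuclideanSpace ℝ (Fin d), Hv ⬝ᵥ z = (H *ᵥ Δt) ⬝ᵥ z := fun z => rfl
  have hp : phat = Δt - Δt1 := by rw [hΔt1, hΔt, hupdate]; abel
  -- main algebraic identity
  have hid : Δt1 ⬝ᵥ H *ᵥ Δt1 = Δt ⬝ᵥ H *ᵥ Δt + 2 * φ phat + 2 * (e ⬝ᵥ phat) := by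
    rw [hφ phat, hgw, hp]
    simp only [WithLp.ofLp_sub, adddp, hHvdp, mvsub, subdp, dpsub, dotProduct_sub,
      sub_dotProduct]
    linarith [hsym Δt1 Δt,
      dotProduct_comm ((H : Matrix (Fin d) (Fin d) ℝ) *ᵥ Δt) (Δt : Fin d → ℝ),
      dotProduct_comm ((H : Matrix (Fin d) (Fin d) ℝ) *ᵥ Δt) (Δt1 : Fin d → ℝ)]
  -- minimality of pstar
  have hinv : H *ᵥ (pstar : Fin d → ℝ) = g wt := by
    rw [hpstar, Matrix.mulVec_mulVec, Matrix.mul_nonsing_inv _ hH.det_pos.ne'.isUnit,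
      Matrix.one_mulVec]
  have hgv : ∀ v : Fin d → ℝ, g wt ⬝ᵥ v = pstar ⬝ᵥ H *ᵥ v := by
    intro v
    rw [← hinv, dotProduct_comm, hsym]
  have hmin : ∀ q : EuclideanSpace ℝ (Fin d), φ pstar ≤ φ q := by
    intro q
    have h0 := hpsd ((q - pstar : EuclideanSpace ℝ (Fin d)))
    rw [subdp, WithLp.ofLp_sub, mvsub] at h0
    simp only [WithLp.ofLp_toLp, dotProduct_sub] at h0
    rw [hφ q, hφ pstar, hgv q, hgv pstar]
    linarith [hsym q pstar]
  -- Taylor bound : ‖e‖ ≤ L/2 * ‖Δt‖^2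
  have hwt : wstar + Δt = wt := by rw [hΔt]; abel
  have hTay : ‖e‖ ≤ L / 2 * ‖Δt‖ ^ 2 := by
    set C : ℝ := L * ‖Δt‖ ^ 2 with hC
    set γ : ℝ → EuclideanSpace ℝ (Fin d) := fun s => g (wstar + s • Δt) - s • Hv with hγ
    set γ' : ℝ → EuclideanSpace ℝ (Fin d) := fun s =>
      (LinearMap.toContinuousLinearMap (Matrix.toEuclideanLin (Hf (wstar + s • Δt)))) Δt - Hv
      with hγ'def
    have hγ' : ∀ s : ℝ, HasDerivAt γ (γ' s) s := by
      intro s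
      have h1 : HasDerivAt (fun s : ℝ => wstar + s • Δt) Δt s := by
        simpa using ((hasDerivAt_id s).smul_const Δt).const_add wstar
      have h2 := (hhess (wstar + s • Δt)).comp_hasDerivAt s h1
      have h3 : HasDerivAt (fun s : ℝ => s • Hv) Hv s := by
        simpa using (hasDerivAt_id s).smul_const Hv
      exact h2.sub h3
    have hbound : ∀ s ∈ Set.Ico (0:ℝ) 1, ‖γ' s‖ ≤ C * (1 - s) := by
      intro s hs
      have hHv2 : Hv = (LinearMap.toContinuousLinearMap (Matrix.toEuclideanLin H)) Δt := rfl
      have hw : wstar + s • Δt - wt = (s - 1) • Δt := by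
        rw [← hwt, sub_smul, one_smul]; abel
      calc ‖γ' s‖ = ‖(LinearMap.toContinuousLinearMap (Matrix.toEuclideanLin (Hf (wstar + s • Δt)))
            - LinearMap.toContinuousLinearMap (Matrix.toEuclideanLin H)) Δt‖ := by
              rw [hγ'def]; rw [ContinuousLinearMap.sub_apply, hHv2]
        _ ≤ ‖LinearMap.toContinuousLinearMap (Matrix.toEuclideanLin (Hf (wstar + s • Δt)))
            - LinearMap.toContinuousLinearMap (Matrix.toEuclideanLin H)‖ * ‖Δt‖ :=
              ContinuousLinearMap.le_opNorm _ _
        _ ≤ (L * ‖wstar + s • Δt - wt‖) * ‖Δt‖ := by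
              apply mul_le_mul_of_nonneg_right _ (norm_nonneg _)
              rw [hHdef]
              exact hlip _ _
        _ = C * (1 - s) := by
              rw [hw, norm_smul, Real.norm_eq_abs, abs_of_nonpos (by linarith [hs.2] : s - 1 ≤ 0)]
              rw [hC]; ring
    have hB : ∀ s : ℝ, HasDerivAt (fun s : ℝ => C * (s - s ^ 2 / 2)) (C * (1 - s)) s := by
      intro s
      have h := (((hasDerivAt_id s).sub ((hasDerivAt_pow 2 s).div_const 2))).const_mul C
      refine h.congr_deriv ?_
      push_cast
      ring
    have hcont : ContinuousOn γ (Set.Icc (0:ℝ) 1) :=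
      fun s _ => (hγ' s).continuousAt.continuousWithinAt
    have ha : ‖γ 0‖ ≤ C * ((0:ℝ) - (0:ℝ) ^ 2 / 2) := by
      have : γ 0 = 0 := by simp [hγ, hstar]
      rw [this]; simp
    have key := image_norm_le_of_norm_deriv_right_le_deriv_boundary hcont
      (fun s hs => (hγ' s).hasDerivWithinAt) ha hB hbound
      (Set.right_mem_Icc.2 zero_le_one)
    have hγ1 : γ 1 = e := by
      rw [hγ]; simp only [one_smul, hwt, hedef]
    rw [hγ1] at key
    calc ‖e‖ ≤ C * ((1:ℝ) - (1:ℝ) ^ 2 / 2) := key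
      _ = L / 2 * ‖Δt‖ ^ 2 := by rw [hC]; ring
  -- Cauchy–Schwarz
  have hdpinner : ∀ x y : EuclideanSpace ℝ (Fin d),
      (x : Fin d → ℝ) ⬝ᵥ y = @inner ℝ _ _ x y := by
    intro x y
    rw [EuclideanSpace.inner_eq_star_dotProduct]
    simp [dotProduct, mul_comm]
  have hcs : -(e ⬝ᵥ Δt1) ≤ (L / 2 * ‖Δt‖ ^ 2) * ‖Δt1‖ := by
    have h1 : -(e ⬝ᵥ Δt1) ≤ |(e : Fin d → ℝ) ⬝ᵥ Δt1| := neg_le_abs _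
    have h2 : |(e : Fin d → ℝ) ⬝ᵥ Δt1| ≤ ‖e‖ * ‖Δt1‖ := by
      rw [hdpinner e Δt1]
      exact abs_real_inner_le_norm e Δt1
    have h3 : ‖e‖ * ‖Δt1‖ ≤ (L / 2 * ‖Δt‖ ^ 2) * ‖Δt1‖ :=
      mul_le_mul_of_nonneg_right hTay (norm_nonneg _)
    linarith
  -- assemble
  have hq2 : φ ((1 - ζ ^ 2)⁻¹ • Δt) = (1/2) * ((1 - ζ ^ 2)⁻¹) ^ 2 * (Δt ⬝ᵥ H *ᵥ Δt)
      - (1 - ζ ^ 2)⁻¹ * ((Δt ⬝ᵥ H *ᵥ Δt) + e ⬝ᵥ Δt) := by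
    rw [hφ, hgw, adddp, hHvdp, smuldp, WithLp.ofLp_smul, mvsmul]
    have hdps : ∀ (c : ℝ) (x y : EuclideanSpace ℝ (Fin d)),
        (x : Fin d → ℝ) ⬝ᵥ (c • (y : Fin d → ℝ)) = c * (x ⬝ᵥ y) := by
      intro c x y
      rw [dotProduct_smul]; simp
    rw [hdps, hdps, hdps]
    rw [dotProduct_comm ((H : Matrix (Fin d) (Fin d) ℝ) *ᵥ Δt) Δt]
    ring
  have h1 : φ phat ≤ ε ^ 2 + (1 - ζ ^ 2) * φ ((1 - ζ ^ 2)⁻¹ • Δt) :=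
    hphat.trans (add_le_add_right
      (mul_le_mul_of_nonneg_left (hmin _) hs2.le) _)
  have hep : e ⬝ᵥ phat = e ⬝ᵥ Δt - e ⬝ᵥ Δt1 := by rw [hp, WithLp.ofLp_sub 2 Δt Δt1, dpsub]
  rw [hq2] at h1
  rw [hep] at hid
  have hfin := stmt6_aux (Δt ⬝ᵥ H *ᵥ Δt) (e ⬝ᵥ Δt) (e ⬝ᵥ Δt1) (Δt1 ⬝ᵥ H *ᵥ Δt1)
    (φ phat) ε ζ ((L / 2 * ‖Δt‖ ^ 2) * ‖Δt1‖) hs2 h1 hid hcs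
  calc Δt1 ⬝ᵥ H *ᵥ Δt1
      ≤ 2 * ((L / 2 * ‖Δt‖ ^ 2) * ‖Δt1‖) + (ζ ^ 2 / (1 - ζ ^ 2)) * (Δt ⬝ᵥ H *ᵥ Δt)
        + 2 * ε ^ 2 := hfin
    _ = L * ‖Δt1‖ * ‖Δt‖ ^ 2 + (ζ ^ 2 / (1 - ζ ^ 2)) * (Δt ⬝ᵥ H *ᵥ Δt) + 2 * ε ^ 2 := by
        ring
end

section
/- Let X₁,…,X_m be independent random variables taking values in a set A, and f : A^m → ℝ satisfy the bounded differences condition with constants c₁,…,c_m: changing the i-th coordinate changes f by at most c_i. Then for every t > 0, P[f(X₁,…,X_m) − E f(X₁,…,X_m) ≥ t] ≤ exp(−2t²/∑_{i=1}^m c_i²). -/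
open MeasureTheory ProbabilityTheory Real

lemma mc_aux1 {p : ℝ} (hp0 : 0 ≤ p) (hp1 : p ≤ 1) (u : ℝ) :
    -p * u + Real.log (1 - p + p * Real.exp u) ≤ u ^ 2 / 8 := by
  set D : ℝ → ℝ := fun v => 1 - p + p * Real.exp v with hD
  have hDpos : ∀ v, 0 < D v := by
    intro v
    have h1 := Real.exp_pos v
    have h2 : 0 ≤ p * Real.exp v := mul_nonneg hp0 h1.le
    rcases lt_or_eq_of_le hp0 with h | h
    · have : 0 < p * Real.exp v := mul_pos h h1
      simp only [hD]; nlinarith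
    · simp only [hD, ← h]; norm_num
  set φ : ℝ → ℝ := fun v => -p * v + Real.log (D v) with hφ
  set φ' : ℝ → ℝ := fun v => -p + p * Real.exp v / D v with hφ'
  have hd1 : ∀ v, HasDerivAt φ (φ' v) v := by
    intro v
    have hD1 : HasDerivAt D (p * Real.exp v) v := by
      exact ((Real.hasDerivAt_exp v).const_mul p).const_add (1 - p)
    have h := ((hasDerivAt_id v).const_mul (-p)).add (hD1.log (hDpos v).ne')
    have e : φ' v = -p * 1 + p * Real.exp v / D v := by simp only [hφ']; ring
    rw [e]; exact h
  set φ'' : ℝ → ℝ := fun v =>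
    (p * Real.exp v * D v - p * Real.exp v * (p * Real.exp v)) / (D v) ^ 2 with hφ''
  have hd2 : ∀ v, HasDerivAt φ' (φ'' v) v := by
    intro v
    have hD1 : HasDerivAt D (p * Real.exp v) v := by
      exact ((Real.hasDerivAt_exp v).const_mul p).const_add (1 - p)
    have hN : HasDerivAt (fun w => p * Real.exp w) (p * Real.exp v) v :=
      (Real.hasDerivAt_exp v).const_mul p
    simpa [hφ', hφ''] using (hN.div hD1 (hDpos v).ne').const_add (-p)
  have key : ∀ d e : ℝ, 0 ≤ e → 0 < d → e ≤ d →
      |(e * d - e * e) / d ^ 2| ≤ 1 / 4 := by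
    intro d e he hd hle
    rw [abs_div, abs_of_nonneg (by positivity : (0:ℝ) ≤ d ^ 2),
      div_le_iff₀ (by positivity), abs_le]
    constructor
    · nlinarith [mul_nonneg he (sub_nonneg.2 hle), sq_nonneg d]
    · nlinarith [sq_nonneg (d - 2 * e)]
  have h2bound : ∀ v, ‖φ'' v‖ ≤ 1 / 4 := by
    intro v
    have hd := hDpos v
    have he : 0 ≤ p * Real.exp v := mul_nonneg hp0 (Real.exp_pos v).le
    have hle : p * Real.exp v ≤ D v := by simp only [hD]; nlinarith
    have := key (D v) (p * Real.exp v) he hd hle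
    rw [abs_div, abs_of_nonneg (by positivity : (0:ℝ) ≤ (D v)^2)] at this
    simpa [hφ'', abs_div, abs_of_nonneg (by positivity : (0:ℝ) ≤ (D v)^2), Real.norm_eq_abs] using this
  -- first derivative bound
  have h1bound : ∀ v, |φ' v| ≤ |v| / 4 := by
    intro v
    have := Convex.norm_image_sub_le_of_norm_hasDerivWithin_le
      (fun x _ => (hd2 x).hasDerivWithinAt) (fun x _ => h2bound x)
      (convex_univ (𝕜 := ℝ) (E := ℝ)) (Set.mem_univ 0) (Set.mem_univ v)
    have hz : φ' 0 = 0 := by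
      simp only [hφ', hD]
      rw [Real.exp_zero]
      field_simp
      ring
    rw [hz, sub_zero, sub_zero, Real.norm_eq_abs, Real.norm_eq_abs] at this
    linarith
  have hφ0 : φ 0 = 0 := by simp [hφ, hD]
  set M : ℝ → ℝ := fun v => v ^ 2 / 8 - φ v with hM
  have hdM : ∀ v, HasDerivAt M (v / 4 - φ' v) v := by
    intro v
    have h1 : HasDerivAt (fun w : ℝ => w ^ 2 / 8) (v / 4) v := by
      have := ((hasDerivAt_pow 2 v).div_const 8)
      exact this.congr_deriv (by rw [show (2:ℕ) - 1 = 1 from rfl, pow_one]; push_cast; ring)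
    exact h1.sub (hd1 v)
  have hMnonneg : 0 ≤ M u := by
    rcases le_or_gt 0 u with hu | hu
    · have hmono : MonotoneOn M (Set.Ici 0) := by
        apply monotoneOn_of_deriv_nonneg (convex_Ici 0)
        · exact (fun v _ => (hdM v).continuousAt.continuousWithinAt)
        · exact fun v _ => ((hdM v).differentiableAt).differentiableWithinAt
        · intro v hv
          rw [interior_Ici] at hv
          rw [(hdM v).deriv]
          have := h1bound v
          rw [abs_of_pos (Set.mem_Ioi.1 hv)] at this
          have := abs_le.1 this
          linarith [this.2]
      have := hmono (Set.self_mem_Ici) (Set.mem_Ici.2 hu) hu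
      simpa [hM, hφ0] using this
    · have hanti : AntitoneOn M (Set.Iic 0) := by
        apply antitoneOn_of_deriv_nonpos (convex_Iic 0)
        · exact (fun v _ => (hdM v).continuousAt.continuousWithinAt)
        · exact fun v _ => ((hdM v).differentiableAt).differentiableWithinAt
        · intro v hv
          rw [interior_Iic] at hv
          rw [(hdM v).deriv]
          have := h1bound v
          rw [abs_of_neg (Set.mem_Iio.1 hv)] at this
          have := abs_le.1 this
          linarith [this.1]
      have := hanti (Set.mem_Iic.2 hu.le) (Set.self_mem_Iic) hu.le
      simpa [hM, hφ0] using this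
  have : φ u ≤ u ^ 2 / 8 := by
    have := hMnonneg
    simp only [hM] at this
    linarith
  simpa [hφ, hD] using this

lemma mc_integrable_of_bounded {α : Type*} [MeasurableSpace α] {ν : Measure α}
    [IsFiniteMeasure ν] {g : α → ℝ} (hg : Measurable g) (C : ℝ)
    (h : ∀ x, ‖g x‖ ≤ C) : Integrable g ν :=
  (integrable_const C).mono' hg.aestronglyMeasurable (Filter.Eventually.of_forall h)

lemma mc_hoeffding {α : Type*} [MeasurableSpace α] (ν : Measure α)
    [IsProbabilityMeasure ν] {h : α → ℝ} (hmeas : Measurable h) {a b : ℝ}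
    (hab : ∀ x, h x ∈ Set.Icc a b) (s : ℝ) :
    ∫ x, Real.exp (s * h x) ∂ν ≤
      Real.exp (s * ∫ x, h x ∂ν + s ^ 2 * (b - a) ^ 2 / 8) := by
  have hne : Nonempty α := by
    by_contra hemp
    have : ν Set.univ = 0 := by
      rw [Set.univ_eq_empty_iff.2 (not_nonempty_iff.1 hemp)]; simp
    simp [measure_univ] at this
  obtain ⟨x₀⟩ := hne
  have hA : a ≤ b := le_trans (hab x₀).1 (hab x₀).2
  -- integrability of h
  have hCb : ∀ x, ‖h x‖ ≤ max |a| |b| := by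
    intro x
    rw [Real.norm_eq_abs, abs_le]
    constructor
    · calc -(max |a| |b|) ≤ -|a| := by simp
        _ ≤ a := neg_abs_le a
        _ ≤ h x := (hab x).1
    · exact le_trans (hab x).2 (le_trans (le_abs_self b) (le_max_right _ _))
  have hint : Integrable h ν := mc_integrable_of_bounded hmeas _ hCb
  set m' : ℝ := ∫ x, h x ∂ν with hm'
  have hm'a : a ≤ m' := by
    have : ∫ _ : α, a ∂ν ≤ ∫ x, h x ∂ν :=
      integral_mono (integrable_const a) hint fun x => (hab x).1
    simpa using this
  have hm'b : m' ≤ b := by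
    have : ∫ x, h x ∂ν ≤ ∫ _ : α, b ∂ν :=
      integral_mono hint (integrable_const b) fun x => (hab x).2
    simpa using this
  rcases eq_or_lt_of_le hA with heq | hlt
  · -- a = b, so h is constant a
    have hx : ∀ x, h x = a := fun x => le_antisymm (heq ▸ (hab x).2) (hab x).1
    have h1 : (fun x => Real.exp (s * h x)) = fun _ => Real.exp (s * a) := by
      funext x; rw [hx x]
    have h2 : m' = a := by
      rw [hm']
      have : (fun x => h x) = fun _ => a := funext hx
      rw [this]; simp
    rw [h1, h2, ← heq]
    simp
  · -- a < b
    have hba : (0:ℝ) < b - a := sub_pos.2 hlt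
    -- pointwise convexity bound
    have hconv : ∀ x, Real.exp (s * h x) ≤
        ((b - h x) / (b - a)) * Real.exp (s * a) +
        ((h x - a) / (b - a)) * Real.exp (s * b) := by
      intro x
      have h1 : 0 ≤ (b - h x) / (b - a) := div_nonneg (by linarith [(hab x).2]) hba.le
      have h2 : 0 ≤ (h x - a) / (b - a) := div_nonneg (by linarith [(hab x).1]) hba.le
      have h3 : (b - h x) / (b - a) + (h x - a) / (b - a) = 1 := by
        field_simp
        ring
      have := convexOn_exp.2 (Set.mem_univ (s * a)) (Set.mem_univ (s * b)) h1 h2 h3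
      simp only [smul_eq_mul] at this
      have harg : (b - h x) / (b - a) * (s * a) + (h x - a) / (b - a) * (s * b)
          = s * h x := by field_simp; ring
      rwa [harg] at this
    -- integrate
    have hintexp : Integrable (fun x => Real.exp (s * h x)) ν := by
      apply mc_integrable_of_bounded (by fun_prop) (Real.exp (|s| * max |a| |b|))
      intro x
      rw [Real.norm_eq_abs, abs_exp, Real.exp_le_exp]
      calc s * h x ≤ |s * h x| := le_abs_self _
        _ = |s| * |h x| := abs_mul _ _
        _ ≤ |s| * max |a| |b| := by
            apply mul_le_mul_of_nonneg_left _ (abs_nonneg s)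
            simpa [Real.norm_eq_abs] using hCb x
    have hbnd1 : ∀ x, ‖((b - h x) / (b - a)) * Real.exp (s * a)‖ ≤ Real.exp (s * a) := by
      intro x
      rw [norm_mul, Real.norm_eq_abs, Real.norm_eq_abs, abs_exp]
      have h1 : |(b - h x) / (b - a)| ≤ 1 := by
        rw [abs_div, abs_of_pos hba, div_le_one hba, abs_le]
        constructor <;> [linarith [(hab x).2, (hab x).1]; linarith [(hab x).1]]
      nlinarith [Real.exp_pos (s * a), abs_nonneg ((b - h x) / (b - a))]
    have hbnd2 : ∀ x, ‖((h x - a) / (b - a)) * Real.exp (s * b)‖ ≤ Real.exp (s * b) := by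
      intro x
      rw [norm_mul, Real.norm_eq_abs, Real.norm_eq_abs, abs_exp]
      have h1 : |(h x - a) / (b - a)| ≤ 1 := by
        rw [abs_div, abs_of_pos hba, div_le_one hba, abs_le]
        constructor <;> [linarith [(hab x).1, (hab x).2]; linarith [(hab x).2]]
      nlinarith [Real.exp_pos (s * b), abs_nonneg ((h x - a) / (b - a))]
    have hi1 : Integrable (fun x => ((b - h x) / (b - a)) * Real.exp (s * a)) ν :=
      mc_integrable_of_bounded (by fun_prop) _ hbnd1
    have hi2 : Integrable (fun x => ((h x - a) / (b - a)) * Real.exp (s * b)) ν :=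
      mc_integrable_of_bounded (by fun_prop) _ hbnd2
    have hintrhs : Integrable (fun x => ((b - h x) / (b - a)) * Real.exp (s * a) +
        ((h x - a) / (b - a)) * Real.exp (s * b)) ν := hi1.add hi2
    have step1 : ∫ x, Real.exp (s * h x) ∂ν ≤
        ((b - m') / (b - a)) * Real.exp (s * a) +
        ((m' - a) / (b - a)) * Real.exp (s * b) := by
      calc ∫ x, Real.exp (s * h x) ∂ν
          ≤ ∫ x, (((b - h x) / (b - a)) * Real.exp (s * a) +
              ((h x - a) / (b - a)) * Real.exp (s * b)) ∂ν :=
            integral_mono hintexp hintrhs hconv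
        _ = ((b - m') / (b - a)) * Real.exp (s * a) +
            ((m' - a) / (b - a)) * Real.exp (s * b) := by
            rw [integral_add hi1 hi2, integral_mul_const, integral_mul_const]
            congr 2
            · rw [integral_div]
              congr 1
              rw [integral_sub (integrable_const b) hint]
              simp [hm']
            · rw [integral_div]
              congr 1
              rw [integral_sub hint (integrable_const a)]
              simp [hm']
    -- now the analytic bound
    set p : ℝ := (m' - a) / (b - a) with hp
    set u : ℝ := s * (b - a) with hu
    have hp0 : 0 ≤ p := div_nonneg (by linarith) hba.le
    have hp1 : p ≤ 1 := by
      rw [hp, div_le_one hba]; linarith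
    have hD : (0:ℝ) < 1 - p + p * Real.exp u := by
      rcases lt_or_eq_of_le hp0 with h | h
      · nlinarith [Real.exp_pos u, mul_pos h (Real.exp_pos u)]
      · rw [← h]; norm_num
    have key := mc_aux1 hp0 hp1 u
    have hrw : ((b - m') / (b - a)) * Real.exp (s * a) +
        ((m' - a) / (b - a)) * Real.exp (s * b)
        = Real.exp (s * a) * (1 - p + p * Real.exp u) := by
      have hsb : s * b = s * a + u := by rw [hu]; ring
      have h1p : (b - m') / (b - a) = 1 - p := by
        rw [hp]; field_simp; ring
      rw [h1p, hsb, Real.exp_add]; ring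
    have step2 : Real.exp (s * a) * (1 - p + p * Real.exp u) ≤
        Real.exp (s * m' + s ^ 2 * (b - a) ^ 2 / 8) := by
      rw [← Real.exp_log hD, ← Real.exp_add, Real.exp_le_exp]
      have hpu : p * u = s * (m' - a) := by
        rw [hp, hu]; field_simp
      have hu2 : u ^ 2 / 8 = s ^ 2 * (b - a) ^ 2 / 8 := by rw [hu]; ring
      nlinarith [key]
    calc ∫ x, Real.exp (s * h x) ∂ν ≤ _ := step1
      _ = Real.exp (s * a) * (1 - p + p * Real.exp u) := hrw
      _ ≤ Real.exp (s * m' + s ^ 2 * (b - a) ^ 2 / 8) := step2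

lemma mc_bdd_total {n : ℕ} {A : Type*} (f : (Fin n → A) → ℝ) (c : Fin n → ℝ)
    (hbdd : ∀ (i : Fin n) (y : Fin n → A) (a : A),
      |f y - f (Function.update y i a)| ≤ c i) (x y : Fin n → A) :
    |f x - f y| ≤ ∑ i, c i := by
  classical
  have key : ∀ (s : Finset (Fin n)) (x y : Fin n → A),
      (∀ i ∉ s, x i = y i) → |f x - f y| ≤ ∑ i ∈ s, c i := by
    intro s
    induction s using Finset.induction with
    | empty =>
      intro x y hagree
      have : x = y := funext fun i => hagree i (Finset.notMem_empty i)
      simp [this]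
    | @insert j s hj ih =>
      intro x y hagree
      set x' := Function.update x j (y j) with hx'
      have h1 : |f x - f x'| ≤ c j := hbdd j x (y j)
      have h2 : |f x' - f y| ≤ ∑ i ∈ s, c i := by
        apply ih
        intro i hi
        by_cases hij : i = j
        · subst hij; simp [hx']
        · rw [hx', Function.update_of_ne hij]
          exact hagree i (by simp [hi, hij])
      calc |f x - f y| = |(f x - f x') + (f x' - f y)| := by ring_nf
        _ ≤ |f x - f x'| + |f x' - f y| := abs_add_le _ _
        _ ≤ c j + ∑ i ∈ s, c i := add_le_add h1 h2
        _ = ∑ i ∈ insert j s, c i := (Finset.sum_insert hj).symm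
  exact key Finset.univ x y (fun i hi => absurd (Finset.mem_univ i) hi)

set_option maxHeartbeats 2000000 in
lemma mc_mgf_pi {A : Type*} [MeasurableSpace A] :
    ∀ (n : ℕ) (ν : Fin n → Measure A), (∀ i, IsProbabilityMeasure (ν i)) →
    ∀ (f : (Fin n → A) → ℝ), Measurable f →
    ∀ (c : Fin n → ℝ), (∀ (i : Fin n) (y : Fin n → A) (a : A),
      |f y - f (Function.update y i a)| ≤ c i) →
    ∀ s : ℝ,
    ∫ x, Real.exp (s * f x) ∂(Measure.pi ν) ≤
      Real.exp (s * (∫ x, f x ∂(Measure.pi ν)) + s ^ 2 * (∑ i, (c i) ^ 2) / 8) := by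
  intro n
  induction n with
  | zero =>
    intro ν hprob f hf c hbdd s
    haveI : ∀ i, IsProbabilityMeasure (ν i) := hprob
    have hconst : f = fun _ => f default := funext fun x => by
      congr 1; exact Subsingleton.elim x default
    rw [hconst]
    simp
  | succ n ih =>
    intro ν hprob f hf c hbdd s
    haveI : ∀ i, IsProbabilityMeasure (ν i) := hprob
    -- A is nonempty
    have hne : Nonempty A := by
      by_contra hemp
      have h0 : (ν 0) Set.univ = 0 := by
        rw [Set.univ_eq_empty_iff.2 (not_nonempty_iff.1 hemp)]; simp
      simp [measure_univ] at h0
    obtain ⟨a₀⟩ := hne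
    have hc : ∀ i, 0 ≤ c i := fun i => by
      have := hbdd i (fun _ => a₀) a₀
      simpa [Function.update_eq_self] using this
    -- boundedness of f
    set B : ℝ := |f (fun _ => a₀)| + ∑ i, c i with hB
    have hfB : ∀ x, |f x| ≤ B := by
      intro x
      have := mc_bdd_total f c hbdd x (fun _ => a₀)
      calc |f x| = |f (fun _ => a₀) + (f x - f (fun _ => a₀))| := by ring_nf
        _ ≤ |f (fun _ => a₀)| + |f x - f (fun _ => a₀)| := abs_add_le _ _
        _ ≤ B := by rw [hB]; linarith
    -- product decomposition
    set ν' : Fin n → Measure A := fun i => ν i.succ with hν'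
    haveI : ∀ i, IsProbabilityMeasure (ν' i) := fun i => hprob i.succ
    set π' : Measure (Fin n → A) := Measure.pi ν' with hπ'
    set e := MeasurableEquiv.piFinSuccAbove (fun _ : Fin (n + 1) => A) 0 with he
    have hmp : MeasurePreserving e (Measure.pi ν) ((ν 0).prod π') :=
      measurePreserving_piFinSuccAbove ν 0
    have hesymm : ∀ q : A × (Fin n → A), e.symm q = Fin.cons q.1 q.2 := by
      intro q
      simp [he, MeasurableEquiv.piFinSuccAbove_symm_apply, Fin.insertNthEquiv,
        Fin.insertNth_zero']
    have hcomp : ∀ g : (Fin (n + 1) → A) → ℝ,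
        ∫ x, g x ∂(Measure.pi ν) =
        ∫ q : A × (Fin n → A), g (Fin.cons q.1 q.2) ∂((ν 0).prod π') := by
      intro g
      rw [← (MeasurePreserving.symm e hmp).integral_comp e.symm.measurableEmbedding g]
      congr 1
      funext q
      rw [hesymm q]
    -- measurability of cons
    have hcons : Measurable (fun q : A × (Fin n → A) => (Fin.cons q.1 q.2 : Fin (n+1) → A)) := by
      apply measurable_pi_lambda
      intro i
      refine Fin.cases ?_ ?_ i
      · simpa using measurable_fst
      · intro j
        simpa [Function.comp_def] using (measurable_pi_apply j).comp measurable_snd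
    have hconsa : ∀ y : Fin n → A, Measurable (fun a : A => (Fin.cons a y : Fin (n+1) → A)) := by
      intro y
      apply measurable_pi_lambda
      intro i
      refine Fin.cases ?_ ?_ i
      · simpa using measurable_id'
      · intro j; simpa using measurable_const
    -- the conditional mean g
    set g : (Fin n → A) → ℝ := fun y => ∫ a, f (Fin.cons a y) ∂(ν 0) with hg
    have hFmeas : Measurable (fun q : (Fin n → A) × A => f (Fin.cons q.2 q.1)) := by
      apply hf.comp
      exact hcons.comp (measurable_snd.prodMk measurable_fst)
    have hgmeas : Measurable g :=
      hFmeas.stronglyMeasurable.integral_prod_right'.measurable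
    have hgB : ∀ y, |g y| ≤ B := by
      intro y
      have : ‖∫ a, f (Fin.cons a y) ∂(ν 0)‖ ≤ B * ((ν 0) Set.univ).toReal :=
        norm_integral_le_of_norm_le_const
          (Filter.Eventually.of_forall fun a => by simpa using hfB (Fin.cons a y))
      simpa [measure_univ] using this
    -- bounded differences for g
    have hbddg : ∀ (j : Fin n) (y : Fin n → A) (b : A),
        |g y - g (Function.update y j b)| ≤ c j.succ := by
      intro j y b
      have hi1 : Integrable (fun a => f (Fin.cons a y)) (ν 0) :=
        mc_integrable_of_bounded (hf.comp (hconsa y)) B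
          (fun a => by simpa using hfB _)
      have hi2 : Integrable (fun a => f (Fin.cons a (Function.update y j b))) (ν 0) :=
        mc_integrable_of_bounded (hf.comp (hconsa _)) B
          (fun a => by simpa using hfB _)
      have hsub : g y - g (Function.update y j b) =
          ∫ a, (f (Fin.cons a y) - f (Fin.cons a (Function.update y j b))) ∂(ν 0) := by
        rw [integral_sub hi1 hi2]
      rw [hsub]
      have : ‖∫ a, (f (Fin.cons a y) - f (Fin.cons a (Function.update y j b))) ∂(ν 0)‖ ≤
          c j.succ * ((ν 0) Set.univ).toReal := by
        apply norm_integral_le_of_norm_le_const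
        apply Filter.Eventually.of_forall
        intro a
        rw [Real.norm_eq_abs]
        have hupd : (Fin.cons a (Function.update y j b) : Fin (n+1) → A) =
            Function.update (Fin.cons a y) j.succ b := by
          funext k
          refine Fin.cases ?_ ?_ k
          · simp [(Fin.succ_ne_zero j).symm]
          · intro j'
            by_cases hjj : j' = j
            · subst hjj; simp
            · rw [Fin.cons_succ, Function.update_of_ne hjj,
                Function.update_of_ne (fun h => hjj (Fin.succ_injective _ h)), Fin.cons_succ]
        rw [hupd]
        exact hbdd j.succ (Fin.cons a y) b
      simpa [measure_univ] using this
    -- inner Hoeffding bound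
    have hinner : ∀ y : Fin n → A,
        ∫ a, Real.exp (s * f (Fin.cons a y)) ∂(ν 0) ≤
        Real.exp (s * g y + s ^ 2 * (c 0) ^ 2 / 8) := by
      intro y
      set h : A → ℝ := fun a => f (Fin.cons a y) with hh
      have hhm : Measurable h := hf.comp (hconsa y)
      have hdiff : ∀ a a', h a - h a' ≤ c 0 := by
        intro a a'
        have hupd : (Fin.cons a' y : Fin (n+1) → A) =
            Function.update (Fin.cons a y) 0 a' := (Fin.update_cons_zero ..).symm
        have := hbdd 0 (Fin.cons a y) a'
        rw [← hupd] at this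
        exact le_trans (le_abs_self _) this
      have hRne : (Set.range h).Nonempty := ⟨h a₀, ⟨a₀, rfl⟩⟩
      have hbdda : BddAbove (Set.range h) := by
        refine ⟨h a₀ + c 0, ?_⟩
        rintro z ⟨a, rfl⟩
        linarith [hdiff a a₀]
      have hbddb : BddBelow (Set.range h) := by
        refine ⟨h a₀ - c 0, ?_⟩
        rintro z ⟨a, rfl⟩
        linarith [hdiff a₀ a]
      set aI : ℝ := sInf (Set.range h) with haI
      set bI : ℝ := sSup (Set.range h) with hbI
      have hmem : ∀ a, h a ∈ Set.Icc aI bI := fun a =>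
        ⟨csInf_le hbddb ⟨a, rfl⟩, le_csSup hbdda ⟨a, rfl⟩⟩
      have haIbI : aI ≤ bI := le_trans (hmem a₀).1 (hmem a₀).2
      have hlen : bI - aI ≤ c 0 := by
        have hub : bI ≤ aI + c 0 := by
          apply csSup_le hRne
          rintro z ⟨a, rfl⟩
          have : h a - c 0 ≤ aI := by
            apply le_csInf hRne
            rintro z' ⟨a', rfl⟩
            linarith [hdiff a a']
          linarith
        linarith
      have hoef := mc_hoeffding (ν 0) hhm hmem s
      refine le_trans hoef ?_
      rw [Real.exp_le_exp]
      have hsq : (bI - aI) ^ 2 ≤ (c 0) ^ 2 :=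
        pow_le_pow_left₀ (by linarith) hlen 2
      have hgy : ∫ a, h a ∂(ν 0) = g y := rfl
      rw [hgy]
      nlinarith [sq_nonneg s]
    -- integrability facts
    have hexpB : ∀ x : Fin (n+1) → A, ‖Real.exp (s * f x)‖ ≤ Real.exp (|s| * B) := by
      intro x
      rw [Real.norm_eq_abs, Real.abs_exp, Real.exp_le_exp]
      calc s * f x ≤ |s * f x| := le_abs_self _
        _ = |s| * |f x| := abs_mul _ _
        _ ≤ |s| * B := mul_le_mul_of_nonneg_left (hfB x) (abs_nonneg s)
    have hIprod : Integrable (fun q : A × (Fin n → A) =>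
        Real.exp (s * f (Fin.cons q.1 q.2))) ((ν 0).prod π') :=
      mc_integrable_of_bounded ((measurable_exp.comp ((hf.comp hcons).const_mul s)))
        (Real.exp (|s| * B)) (fun q => hexpB _)
    have hIf : Integrable (fun q : A × (Fin n → A) =>
        f (Fin.cons q.1 q.2)) ((ν 0).prod π') :=
      mc_integrable_of_bounded (hf.comp hcons) B (fun q => by simpa using hfB _)
    have hImarg : Integrable (fun y => ∫ a, Real.exp (s * f (Fin.cons a y)) ∂(ν 0)) π' := by
      apply mc_integrable_of_bounded
      · exact (((measurable_exp.comp (hFmeas.const_mul s))).stronglyMeasurable.integral_prod_right').measurable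
      · intro y
        have : ‖∫ a, Real.exp (s * f (Fin.cons a y)) ∂(ν 0)‖ ≤
            Real.exp (|s| * B) * ((ν 0) Set.univ).toReal :=
          norm_integral_le_of_norm_le_const
            (Filter.Eventually.of_forall fun a => hexpB _)
        simpa [measure_univ] using this
    have hIrhs : Integrable (fun y => Real.exp (s * g y + s ^ 2 * (c 0) ^ 2 / 8)) π' := by
      apply mc_integrable_of_bounded (by fun_prop)
        (Real.exp (|s| * B + s ^ 2 * (c 0) ^ 2 / 8))
      intro y
      rw [Real.norm_eq_abs, Real.abs_exp, Real.exp_le_exp]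
      have : s * g y ≤ |s| * B := by
        calc s * g y ≤ |s * g y| := le_abs_self _
          _ = |s| * |g y| := abs_mul _ _
          _ ≤ |s| * B := mul_le_mul_of_nonneg_left (hgB y) (abs_nonneg s)
      linarith
    -- the chain
    have step1 : ∫ x, Real.exp (s * f x) ∂(Measure.pi ν) =
        ∫ y, ∫ a, Real.exp (s * f (Fin.cons a y)) ∂(ν 0) ∂π' := by
      rw [hcomp (fun x => Real.exp (s * f x))]
      exact integral_prod_symm _ hIprod
    have step2 : ∫ x, f x ∂(Measure.pi ν) = ∫ y, g y ∂π' := by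
      rw [hcomp f]
      exact integral_prod_symm _ hIf
    have ihg : ∫ y, Real.exp (s * g y) ∂π' ≤
        Real.exp (s * (∫ y, g y ∂π') + s ^ 2 * (∑ j : Fin n, (c j.succ) ^ 2) / 8) := by
      have h := ih ν' (fun i => hprob i.succ) g hgmeas (fun j => c j.succ) hbddg s
      simpa using h
    calc ∫ x, Real.exp (s * f x) ∂(Measure.pi ν)
        = ∫ y, ∫ a, Real.exp (s * f (Fin.cons a y)) ∂(ν 0) ∂π' := step1
      _ ≤ ∫ y, Real.exp (s * g y + s ^ 2 * (c 0) ^ 2 / 8) ∂π' :=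
          integral_mono hImarg hIrhs hinner
      _ = Real.exp (s ^ 2 * (c 0) ^ 2 / 8) * ∫ y, Real.exp (s * g y) ∂π' := by
          have hfe : (fun y => Real.exp (s * g y + s ^ 2 * (c 0) ^ 2 / 8)) =
              fun y => Real.exp (s ^ 2 * (c 0) ^ 2 / 8) * Real.exp (s * g y) := by
            funext y
            rw [← Real.exp_add, add_comm]
          rw [hfe, integral_const_mul]
      _ ≤ Real.exp (s ^ 2 * (c 0) ^ 2 / 8) *
          Real.exp (s * (∫ y, g y ∂π') + s ^ 2 * (∑ j : Fin n, (c j.succ) ^ 2) / 8) :=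
          mul_le_mul_of_nonneg_left ihg (Real.exp_pos _).le
      _ = Real.exp (s * (∫ x, f x ∂(Measure.pi ν)) + s ^ 2 * (∑ i, (c i) ^ 2) / 8) := by
          rw [← Real.exp_add, step2, Fin.sum_univ_succ]
          congr 1
          ring

/-- McDiarmid's inequality: If X₁,…,X_m are independent random
variables with values in A and f : Aᵐ → ℝ satisfies the bounded differences
condition with constants c₁,…,c_m, then for every t > 0,
P[f(X) − E f(X) ≥ t] ≤ exp(−2t²/∑ᵢcᵢ²). -/
theorem stmt19 {Ω A : Type*} [MeasurableSpace Ω] [MeasurableSpace A]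
    {μ : Measure Ω} [IsProbabilityMeasure μ] {m : ℕ}
    (X : Fin m → Ω → A) (hXmeas : ∀ i, Measurable (X i))
    (hXindep : iIndepFun X μ)
    (f : (Fin m → A) → ℝ) (hfmeas : Measurable f)
    (c : Fin m → ℝ)
    (hbdd : ∀ (i : Fin m) (y : Fin m → A) (a : A),
      |f y - f (Function.update y i a)| ≤ c i) :
    ∀ t : ℝ, 0 < t →
      μ {ω | (∫ ω', f (fun i => X i ω') ∂μ) + t ≤ f (fun i => X i ω)} ≤
        ENNReal.ofReal (Real.exp (-2 * t ^ 2 / ∑ i, (c i) ^ 2)) := by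
  intro t ht
  set S : ℝ := ∑ i, (c i) ^ 2 with hS
  rcases eq_or_lt_of_le (Finset.sum_nonneg fun i _ => sq_nonneg (c i) : (0:ℝ) ≤ S) with hS0 | hSpos
  · -- degenerate case: all cᵢ = 0, so the bound is exp(-2t²/0) = exp 0 = 1
    rw [hS, ← hS0]
    simp only [div_zero, Real.exp_zero, ENNReal.ofReal_one]
    exact prob_le_one
  · -- main case
    have hm : 0 < m := by
      by_contra hm
      push_neg at hm
      have hm0 : m = 0 := Nat.le_zero.mp hm
      subst hm0
      simp at hSpos
    -- Ω nonempty, A nonempty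
    have hΩne : Nonempty Ω := by
      by_contra hemp
      have h0 : μ Set.univ = 0 := by
        rw [Set.univ_eq_empty_iff.2 (not_nonempty_iff.1 hemp)]; simp
      simp [measure_univ] at h0
    obtain ⟨ω₀⟩ := hΩne
    have hAne : Nonempty A := ⟨X ⟨0, hm⟩ ω₀⟩
    obtain ⟨a₀⟩ := hAne
    -- the joint law equals the product of marginals
    set ν : Fin m → Measure A := fun i => Measure.map (X i) μ with hν
    haveI : ∀ i, IsProbabilityMeasure (ν i) := fun i => Measure.isProbabilityMeasure_map
      (hXmeas i).aemeasurable
    have hT : Measurable (fun ω => (fun i => X i ω : Fin m → A)) :=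
      measurable_pi_lambda _ hXmeas
    have hlaw : Measure.map (fun ω => (fun i => X i ω : Fin m → A)) μ = Measure.pi ν := by
      refine (Measure.pi_eq fun s hs => ?_).symm
      rw [Measure.map_apply hT (MeasurableSet.univ_pi hs)]
      have hpre : (fun ω => (fun i => X i ω : Fin m → A)) ⁻¹' Set.pi Set.univ s =
          ⋂ i, X i ⁻¹' s i := by
        ext ω; simp [Set.mem_pi]
      rw [hpre]
      have hprod := hXindep.measure_inter_preimage_eq_mul Finset.univ
        (fun i _ => hs i)
      rw [show (⋂ i, X i ⁻¹' s i) = ⋂ i ∈ Finset.univ, X i ⁻¹' s i by simp, hprod]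
      refine Finset.prod_congr rfl fun i _ => ?_
      exact (Measure.map_apply (hXmeas i) (hs i)).symm
    -- boundedness of f
    have hc : ∀ i, 0 ≤ c i := fun i => by
      have := hbdd i (fun _ => a₀) a₀
      simpa [Function.update_eq_self] using this
    set B : ℝ := |f (fun _ => a₀)| + ∑ i, c i with hB
    have hfB : ∀ x, |f x| ≤ B := by
      intro x
      have := mc_bdd_total f c hbdd x (fun _ => a₀)
      calc |f x| = |f (fun _ => a₀) + (f x - f (fun _ => a₀))| := by ring_nf
        _ ≤ |f (fun _ => a₀)| + |f x - f (fun _ => a₀)| := abs_add_le _ _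
        _ ≤ B := by rw [hB]; linarith
    -- set up Chernoff with parameter s = 4t/S
    set s : ℝ := 4 * t / S with hs
    have hs0 : 0 < s := by positivity
    set Y : Ω → ℝ := fun ω => f (fun i => X i ω) with hY
    have hYmeas : Measurable Y := hfmeas.comp hT
    have hEf : ∫ ω', f (fun i => X i ω') ∂μ = ∫ x, f x ∂(Measure.pi ν) := by
      rw [← hlaw, integral_map hT.aemeasurable hfmeas.aestronglyMeasurable]
    have hintY : Integrable (fun ω => Real.exp (s * Y ω)) μ := by
      apply mc_integrable_of_bounded (by fun_prop) (Real.exp (|s| * B))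
      intro ω
      rw [Real.norm_eq_abs, Real.abs_exp, Real.exp_le_exp]
      calc s * Y ω ≤ |s * Y ω| := le_abs_self _
        _ = |s| * |Y ω| := abs_mul _ _
        _ ≤ |s| * B := mul_le_mul_of_nonneg_left (hfB _) (abs_nonneg s)
    have hchernoff := measure_ge_le_exp_mul_mgf (X := Y) (μ := μ) (t := s)
      ((∫ ω', f (fun i => X i ω') ∂μ) + t) hs0.le hintY
    -- bound the mgf
    have hmgf : mgf Y μ s ≤
        Real.exp (s * (∫ ω', f (fun i => X i ω') ∂μ) + s ^ 2 * S / 8) := by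
      have hgm : AEStronglyMeasurable (fun x : Fin m → A => Real.exp (s * f x))
          (Measure.map (fun ω i => X i ω) μ) :=
        ((hfmeas.const_mul s).exp).aestronglyMeasurable
      have h1 : ∫ x, Real.exp (s * f x) ∂(Measure.pi ν) = mgf Y μ s := by
        rw [← hlaw, integral_map hT.aemeasurable hgm]
        rfl
      rw [← h1, hEf]
      exact mc_mgf_pi m ν (fun i => inferInstance) f hfmeas c hbdd s
    -- assemble
    have hbound : (μ {ω | (∫ ω', f (fun i => X i ω') ∂μ) + t ≤ Y ω}).toReal ≤
        Real.exp (-2 * t ^ 2 / S) := by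
      refine le_trans hchernoff ?_
      have h2 : Real.exp (-s * ((∫ ω', f (fun i => X i ω') ∂μ) + t)) * mgf Y μ s ≤
          Real.exp (-s * ((∫ ω', f (fun i => X i ω') ∂μ) + t)) *
          Real.exp (s * (∫ ω', f (fun i => X i ω') ∂μ) + s ^ 2 * S / 8) :=
        mul_le_mul_of_nonneg_left hmgf (Real.exp_pos _).le
      refine le_trans h2 ?_
      rw [← Real.exp_add, Real.exp_le_exp]
      have hSne : S ≠ 0 := ne_of_gt hSpos
      have : s = 4 * t / S := hs
      rw [this]
      field_simp
      apply le_of_eq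
      ring
    -- convert to ENNReal
    have hfin : μ {ω | (∫ ω', f (fun i => X i ω') ∂μ) + t ≤ Y ω} ≠ ⊤ :=
      measure_ne_top μ _
    calc μ {ω | (∫ ω', f (fun i => X i ω') ∂μ) + t ≤ Y ω}
        = ENNReal.ofReal (μ {ω | (∫ ω', f (fun i => X i ω') ∂μ) + t ≤ Y ω}).toReal :=
          (ENNReal.ofReal_toReal hfin).symm
      _ ≤ ENNReal.ofReal (Real.exp (-2 * t ^ 2 / S)) := ENNReal.ofReal_le_ofReal hbound
end
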